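/- Let f be a continuous strictly positive density on [θ̲, θ̄] and B a continuously differentiable function such that f(θ) + (B(θ)f(θ))' > 0 for all θ. Suppose b : [θ̲, θ̄] → ℝ is continuously differentiable with 1 + b'(θ) > 0, b(θ̄) > 0, and θ̲ + b(θ̲) < E[θ]. Define φ(t) = ∫_t^{θ̄} (θ − t − b(t)) f(θ) dθ. Then φ(θ̲) > 0, φ(θ̄) = 0 with φ strictly negative on some interval (θ̄ − ε, θ̄), and φ is strictly single-crossing from above: there is a unique θ̂ ∈ (θ̲, θ̄) with φ(θ̂) = 0 and φ > 0 on [θ̲, θ̂), φ < 0 on (θ̂, θ̄). -/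

import Mathlib

open Set Filter intervalIntegral

/-- The function `φ(t) = ∫_t^{θ̄} (θ − t − b(t)) f(θ) dθ` is positive at `θ̲`, zero at `θ̄`,
negative just below `θ̄`, and strictly single-crossing from above with a unique zero `θ̂`. -/
theorem stmt_5 (θl θu : ℝ) (hθ : θl < θu)
    (f b b' B g : ℝ → ℝ)
    (hf : ContinuousOn f (Icc θl θu)) (hfpos : ∀ θ ∈ Icc θl θu, 0 < f θ)
    (hfdens : (∫ θ in θl..θu, f θ) = 1)
    (hb : ∀ θ ∈ Icc θl θu, HasDerivAt b (b' θ) θ)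
    (hb'cont : ContinuousOn b' (Icc θl θu))
    (hb' : ∀ θ ∈ Icc θl θu, -1 < b' θ)
    (hB : ∀ θ ∈ Icc θl θu, B θ = b θ / (1 + b' θ))
    (hg : ∀ θ ∈ Icc θl θu, HasDerivAt (fun t => B t * f t) (g θ) θ)
    (hA1 : ∀ θ ∈ Icc θl θu, 0 < f θ + g θ)
    (hA2 : 0 < b θu)
    (hA3 : θl + b θl < ∫ θ in θl..θu, θ * f θ) :
    (0 < ∫ θ in θl..θu, (θ - θl - b θl) * f θ) ∧
    ((∫ θ in θu..θu, (θ - θu - b θu) * f θ) = 0) ∧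
    (∃ ε > 0, ∀ t ∈ Ioo (θu - ε) θu, (∫ θ in t..θu, (θ - t - b t) * f θ) < 0) ∧
    (∃ θh ∈ Ioo θl θu, (∫ θ in θh..θu, (θ - θh - b θh) * f θ) = 0 ∧
      (∀ t ∈ Ico θl θh, 0 < ∫ θ in t..θu, (θ - t - b t) * f θ) ∧
      (∀ t ∈ Ioo θh θu, (∫ θ in t..θu, (θ - t - b t) * f θ) < 0) ∧
      (∀ t ∈ Ioo θl θu, (∫ θ in t..θu, (θ - t - b t) * f θ) = 0 → t = θh)) := by
  have hlmem : θl ∈ Icc θl θu := left_mem_Icc.2 hθ.le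
  have humem : θu ∈ Icc θl θu := right_mem_Icc.2 hθ.le
  have hmem : ∀ t ∈ Icc θl θu, uIcc t θu ⊆ Icc θl θu := fun t ht =>
    uIcc_subset_Icc ht humem
  have hintf : ∀ t ∈ Icc θl θu, IntervalIntegrable f MeasureTheory.volume t θu :=
    fun t ht => (hf.mono (hmem t ht)).intervalIntegrable
  have hidf : ContinuousOn (fun θ => θ * f θ) (Icc θl θu) := continuousOn_id.mul hf
  have hintidf : ∀ t ∈ Icc θl θu, IntervalIntegrable (fun θ => θ * f θ)
      MeasureTheory.volume t θu := fun t ht => (hidf.mono (hmem t ht)).intervalIntegrable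
  set F0 : ℝ → ℝ := fun t => ∫ θ in t..θu, f θ with hF0def
  set F1 : ℝ → ℝ := fun t => ∫ θ in t..θu, θ * f θ with hF1def
  set φ : ℝ → ℝ := fun t => F1 t - (t + b t) * F0 t with hφdef
  have h1b' : ∀ t ∈ Icc θl θu, 0 < 1 + b' t := fun t ht => by linarith [hb' t ht]
  -- decomposition
  have hdecomp : ∀ t ∈ Icc θl θu, (∫ θ in t..θu, (θ - t - b t) * f θ) = φ t := by
    intro t ht
    have heq : (fun θ => (θ - t - b t) * f θ) = fun θ => θ * f θ - (t + b t) * f θ := by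
      funext θ; ring
    rw [heq, intervalIntegral.integral_sub (hintidf t ht) ((hintf t ht).const_mul _),
      intervalIntegral.integral_const_mul]
  -- continuity
  have huIcc : uIcc θl θu = Icc θl θu := uIcc_of_le hθ.le
  have hfint : MeasureTheory.IntegrableOn f (uIcc θl θu) MeasureTheory.volume := by
    rw [huIcc]; exact hf.integrableOn_Icc
  have hidfint : MeasureTheory.IntegrableOn (fun θ => θ * f θ) (uIcc θl θu)
      MeasureTheory.volume := by rw [huIcc]; exact hidf.integrableOn_Icc
  have hF0cont : ContinuousOn F0 (Icc θl θu) := by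
    rw [← huIcc]; exact intervalIntegral.continuousOn_primitive_interval_left hfint
  have hF1cont : ContinuousOn F1 (Icc θl θu) := by
    rw [← huIcc]; exact intervalIntegral.continuousOn_primitive_interval_left hidfint
  have hbcont : ContinuousOn b (Icc θl θu) := fun t ht =>
    (hb t ht).continuousAt.continuousWithinAt
  have hBfcont : ContinuousOn (fun t => B t * f t) (Icc θl θu) := fun t ht =>
    (hg t ht).continuousAt.continuousWithinAt
  have hφcont : ContinuousOn φ (Icc θl θu) :=
    hF1cont.sub ((continuousOn_id.add hbcont).mul hF0cont)
  set ψ : ℝ → ℝ := fun t => F0 t - B t * f t with hψdef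
  have hψcont : ContinuousOn ψ (Icc θl θu) := hF0cont.sub hBfcont
  -- derivatives on the interior
  have hderiv : ∀ t ∈ Ioo θl θu, HasDerivAt φ (-(1 + b' t) * ψ t) t ∧
      HasDerivAt ψ (-(f t + g t)) t := by
    intro t ht
    have htIcc : t ∈ Icc θl θu := Ioo_subset_Icc_self ht
    have hnhds : Icc θl θu ∈ nhds t := Icc_mem_nhds ht.1 ht.2
    have hmeasf : StronglyMeasurableAtFilter f (nhds t) MeasureTheory.volume :=
      AEStronglyMeasurable.stronglyMeasurableAtFilter_of_mem
        (hf.aestronglyMeasurable measurableSet_Icc) hnhds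
    have hmeasidf : StronglyMeasurableAtFilter (fun θ => θ * f θ) (nhds t)
        MeasureTheory.volume :=
      AEStronglyMeasurable.stronglyMeasurableAtFilter_of_mem
        (hidf.aestronglyMeasurable measurableSet_Icc) hnhds
    have hcf : ContinuousAt f t := hf.continuousAt hnhds
    have hcidf : ContinuousAt (fun θ => θ * f θ) t := hidf.continuousAt hnhds
    have dF0 : HasDerivAt F0 (-f t) t :=
      intervalIntegral.integral_hasDerivAt_left (hintf t htIcc) hmeasf hcf
    have dF1 : HasDerivAt F1 (-(t * f t)) t :=
      intervalIntegral.integral_hasDerivAt_left (hintidf t htIcc) hmeasidf hcidf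
    have dψ : HasDerivAt ψ (-(f t + g t)) t := by
      have := dF0.sub (hg t htIcc)
      exact this.congr_deriv (by ring)
    refine ⟨?_, dψ⟩
    have dφ : HasDerivAt φ (-(t * f t) - ((1 + b' t) * F0 t + (t + b t) * (-f t))) t :=
      dF1.sub (((hasDerivAt_id t).add (hb t htIcc)).mul dF0)
    have hbB : b t = B t * (1 + b' t) := by
      rw [hB t htIcc, div_mul_cancel₀ _ (h1b' t htIcc).ne']
    convert dφ using 1
    rw [hψdef]
    simp only []
    rw [hbB]; ring
  -- ψ is strictly decreasing
  have hψanti : StrictAntiOn ψ (Icc θl θu) := by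
    apply strictAntiOn_of_deriv_neg (convex_Icc θl θu) hψcont
    intro t ht
    rw [interior_Icc] at ht
    rw [(hderiv t ht).2.deriv]
    have := hA1 t (Ioo_subset_Icc_self ht)
    linarith
  -- endpoint values
  have hF0u : F0 θu = 0 := intervalIntegral.integral_same
  have hF1u : F1 θu = 0 := intervalIntegral.integral_same
  have hφu : φ θu = 0 := by rw [hφdef]; simp only []; rw [hF0u, hF1u]; ring
  have hφl : 0 < φ θl := by
    have : F0 θl = 1 := hfdens
    rw [hφdef]; simp only []; rw [this]
    simp only [mul_one]
    linarith [hA3]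
  have hψu : ψ θu < 0 := by
    have hBu : 0 < B θu := by
      rw [hB θu humem]
      exact div_pos hA2 (h1b' θu humem)
    have : ψ θu = -(B θu * f θu) := by rw [hψdef]; simp only []; rw [hF0u]; ring
    rw [this]
    have := hfpos θu humem
    nlinarith
  -- ψ θl must be positive
  have hψl : 0 < ψ θl := by
    by_contra hcon
    push_neg at hcon
    have hmono : StrictMonoOn φ (Icc θl θu) := by
      apply strictMonoOn_of_deriv_pos (convex_Icc θl θu) hφcont
      intro t ht
      rw [interior_Icc] at ht
      rw [(hderiv t ht).1.deriv]
      have hψt : ψ t < ψ θl := hψanti hlmem (Ioo_subset_Icc_self ht) ht.1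
      have h1 := h1b' t (Ioo_subset_Icc_self ht)
      nlinarith
    have := hmono hlmem humem hθ
    rw [hφu] at this
    linarith
  -- IVT for ψ
  obtain ⟨t0, ht0mem, hψt0⟩ : ∃ t0 ∈ Icc θl θu, ψ t0 = 0 := by
    have := intermediate_value_Icc' hθ.le hψcont
    have h0 : (0 : ℝ) ∈ Icc (ψ θu) (ψ θl) := ⟨hψu.le, hψl.le⟩
    obtain ⟨t0, ht0, h⟩ := this h0
    exact ⟨t0, ht0, h⟩
  have ht0Ioo : t0 ∈ Ioo θl θu := by
    constructor
    · rcases eq_or_lt_of_le ht0mem.1 with h | h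
      · exfalso; rw [← h] at hψt0; linarith
      · exact h
    · rcases eq_or_lt_of_le ht0mem.2 with h2 | h2
      · exfalso; rw [h2] at hψt0; linarith
      · exact h2
  -- φ strictly decreasing on [θl, t0]
  have hsub1 : Icc θl t0 ⊆ Icc θl θu := Icc_subset_Icc le_rfl ht0mem.2
  have hsub2 : Icc t0 θu ⊆ Icc θl θu := Icc_subset_Icc ht0mem.1 le_rfl
  have hφanti : StrictAntiOn φ (Icc θl t0) := by
    apply strictAntiOn_of_deriv_neg (convex_Icc θl t0) (hφcont.mono hsub1)
    intro t ht
    rw [interior_Icc] at ht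
    have htIoo : t ∈ Ioo θl θu := ⟨ht.1, lt_of_lt_of_le ht.2 ht0mem.2⟩
    rw [(hderiv t htIoo).1.deriv]
    have hψt : 0 < ψ t := by
      have := hψanti (Ioo_subset_Icc_self htIoo) ht0mem ht.2
      rw [hψt0] at this; linarith
    have h1 := h1b' t (Ioo_subset_Icc_self htIoo)
    nlinarith
  have hφmono : StrictMonoOn φ (Icc t0 θu) := by
    apply strictMonoOn_of_deriv_pos (convex_Icc t0 θu) (hφcont.mono hsub2)
    intro t ht
    rw [interior_Icc] at ht
    have htIoo : t ∈ Ioo θl θu := ⟨lt_of_le_of_lt ht0mem.1 ht.1, ht.2⟩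
    rw [(hderiv t htIoo).1.deriv]
    have hψt : ψ t < 0 := by
      have := hψanti ht0mem (Ioo_subset_Icc_self htIoo) ht.1
      rw [hψt0] at this; linarith
    have h1 := h1b' t (Ioo_subset_Icc_self htIoo)
    nlinarith
  have hφneg_right : ∀ t ∈ Ico t0 θu, φ t < 0 := by
    intro t ht
    have := hφmono (⟨ht.1, ht.2.le⟩ : t ∈ Icc t0 θu) (right_mem_Icc.2 ht0mem.2) ht.2
    rw [hφu] at this; exact this
  have hφt0 : φ t0 < 0 := hφneg_right t0 ⟨le_rfl, ht0Ioo.2⟩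
  -- IVT for φ on [θl, t0]
  obtain ⟨θh, hθhmem, hφθh⟩ : ∃ θh ∈ Icc θl t0, φ θh = 0 := by
    have := intermediate_value_Icc' ht0mem.1 (hφcont.mono hsub1)
    have h0 : (0 : ℝ) ∈ Icc (φ t0) (φ θl) := ⟨hφt0.le, hφl.le⟩
    obtain ⟨x, hx, h⟩ := this h0
    exact ⟨x, hx, h⟩
  have hθhIoo : θh ∈ Ioo θl t0 := by
    constructor
    · rcases eq_or_lt_of_le hθhmem.1 with h | h
      · exfalso; rw [← h] at hφθh; linarith
      · exact h
    · rcases eq_or_lt_of_le hθhmem.2 with h2 | h2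
      · exfalso; rw [h2] at hφθh; linarith
      · exact h2
  have hθhIccu : θh ∈ Icc θl θu := hsub1 hθhmem
  have hθhIoou : θh ∈ Ioo θl θu := ⟨hθhIoo.1, lt_of_lt_of_le hθhIoo.2 ht0mem.2⟩
  -- sign of φ left and right of θh
  have hφpos : ∀ t ∈ Ico θl θh, 0 < φ t := by
    intro t ht
    have := hφanti (⟨ht.1, ht.2.le.trans hθhmem.2⟩ : t ∈ Icc θl t0) hθhmem ht.2
    rw [hφθh] at this; exact this
  have hφneg : ∀ t ∈ Ioo θh θu, φ t < 0 := by
    intro t ht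
    rcases le_or_gt t t0 with h | h
    · have := hφanti hθhmem (⟨(hθhIoou.1.trans ht.1).le, h⟩ : t ∈ Icc θl t0) ht.1
      rw [hφθh] at this; exact this
    · exact hφneg_right t ⟨h.le, ht.2⟩
  refine ⟨?_, intervalIntegral.integral_same, ?_, θh, hθhIoou, ?_, ?_, ?_, ?_⟩
  · rw [hdecomp θl hlmem]; exact hφl
  · refine ⟨θu - θh, by linarith [hθhIoou.2], fun t ht => ?_⟩
    have ht' : t ∈ Ioo θh θu := by
      constructor
      · have : θu - (θu - θh) = θh := by ring
        rw [this] at ht; exact ht.1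
      · exact ht.2
    rw [hdecomp t (Ioo_subset_Icc_self (⟨hθhIoou.1.trans ht'.1, ht'.2⟩ : t ∈ Ioo θl θu))]
    exact hφneg t ht'
  · rw [hdecomp θh hθhIccu]; exact hφθh
  · intro t ht
    rw [hdecomp t ⟨ht.1, (ht.2.trans_le hθhIccu.2).le⟩]
    exact hφpos t ht
  · intro t ht
    rw [hdecomp t (Ioo_subset_Icc_self (⟨hθhIoou.1.trans ht.1, ht.2⟩ : t ∈ Ioo θl θu))]
    exact hφneg t ht
  · intro t ht h0
    rw [hdecomp t (Ioo_subset_Icc_self ht)] at h0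
    rcases lt_trichotomy t θh with h | h | h
    · have := hφpos t ⟨ht.1.le, h⟩; rw [h0] at this; exact absurd this (lt_irrefl 0)
    · exact h
    · have := hφneg t ⟨h, ht.2⟩; rw [h0] at this; exact absurd this (lt_irrefl 0)
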